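/- Suppose two walks in a directed acyclic graph both pass through vertices u and v, and each walk uses a shortest path between u and v (with respect to positive integer arc lengths). If both walks visit u before v, then the length of the segment from u to v is the same in both walks. Consequently, for delays δ_1, δ_2 satisfying δ_1 + λ(W_1, u) = d + λ(W, u) and δ_2 + λ(W_1, v) = d + λ(W, v) for some fixed walk W and delay d, we have δ_1 = δ_2. -/

import Mathlib

/-- Length of a walk (list of vertices) up to its `j`-th arc: the sum of the
lengths of the first `j` arcs. -/
def lamTo {V : Type*} (w : V → V → ℕ) (W : List V) (j : ℕ) : ℕ :=
  (((W.zip W.tail).take j).map fun p => w p.1 p.2).sum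

private lemma zip_tail_drop {V : Type*} : ∀ (l : List V) (a : ℕ),
    (l.drop a).zip (l.drop a).tail = (l.zip l.tail).drop a
  | _, 0 => rfl
  | [], _ + 1 => rfl
  | [_], _ + 1 => by simp
  | x :: y :: ys, a + 1 => by
    simpa using zip_tail_drop (y :: ys) a

private lemma zip_tail_take {V : Type*} : ∀ (l : List V) (n : ℕ),
    (l.take (n + 1)).zip (l.take (n + 1)).tail = (l.zip l.tail).take n
  | [], _ => by simp
  | _ :: _, 0 => by simp
  | [x], n + 1 => by simp
  | x :: y :: ys, n + 1 => by
    simpa using zip_tail_take (y :: ys) n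

private lemma lamTo_take {V : Type*} (w : V → V → ℕ) (l : List V) (n : ℕ) :
    lamTo w (l.take (n + 1)) n = lamTo w l n := by
  unfold lamTo
  rw [zip_tail_take, List.take_take, min_self]

private lemma lamTo_add {V : Type*} (w : V → V → ℕ) (l : List V) (a j : ℕ) :
    lamTo w l (a + j) = lamTo w l a + lamTo w (l.drop a) j := by
  unfold lamTo
  rw [zip_tail_drop, List.take_add, List.map_append, List.sum_append]

private lemma lamTo_segment {V : Type*} (E : V → V → Prop) (w : V → V → ℕ)
    (W : List V) (h : W.Chain' E) (u v : V) (ju jv : ℕ) (hj : ju < jv)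
    (hu : W[ju]? = some u) (hv : W[jv]? = some v) :
    ∃ Q : List V, Q.Chain' E ∧ Q.head? = some u ∧ Q.getLast? = some v ∧
      lamTo w W ju + lamTo w Q (Q.length - 1) = lamTo w W jv := by
  have hlt : jv < W.length := by
    by_contra hc
    rw [List.getElem?_eq_none (by omega)] at hv
    cases hv
  refine ⟨(W.drop ju).take (jv - ju + 1), ?_, ?_, ?_, ?_⟩
  · exact h.infix (((List.take_prefix _ _).isInfix).trans
      ((List.drop_suffix _ _).isInfix))
  · rw [List.head?_eq_getElem?, List.getElem?_take_of_lt (by omega),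
      List.getElem?_drop, Nat.add_zero, hu]
  · have hlen : ((W.drop ju).take (jv - ju + 1)).length = jv - ju + 1 := by
      rw [List.length_take, List.length_drop]; omega
    rw [List.getLast?_eq_getElem?, hlen, Nat.add_sub_cancel,
      List.getElem?_take_of_lt (by omega), List.getElem?_drop,
      show ju + (jv - ju) = jv by omega, hv]
  · have hlen : ((W.drop ju).take (jv - ju + 1)).length = jv - ju + 1 := by
      rw [List.length_take, List.length_drop]; omega
    rw [hlen, Nat.add_sub_cancel, lamTo_take, ← lamTo_add,
      show ju + (jv - ju) = jv by omega]

/-- In a DAG, if two walks both pass through `u` (before) and `v`, and each uses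
a shortest path between `u` and `v`, then the lamTo_segment lengths agree; consequently
delays satisfying the stated arrival equations are equal. -/
theorem stmt_16 {V : Type*} (E : V → V → Prop)
    (rank : V → ℕ) (hdag : ∀ x y, E x y → rank x < rank y)
    (w : V → V → ℕ) (hw : ∀ x y, E x y → 1 ≤ w x y)
    (W₁ W₂ : List V) (h1 : W₁.Chain' E) (h2 : W₂.Chain' E)
    (u v : V) (j1u j1v j2u j2v : ℕ)
    (hj1 : j1u < j1v) (hj2 : j2u < j2v)
    (h1u : W₁[j1u]? = some u) (h1v : W₁[j1v]? = some v)
    (h2u : W₂[j2u]? = some u) (h2v : W₂[j2v]? = some v)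
    (hshort1 : ∀ Q : List V, Q.Chain' E → Q.head? = some u → Q.getLast? = some v →
      lamTo w W₁ j1v - lamTo w W₁ j1u ≤ lamTo w Q (Q.length - 1))
    (hshort2 : ∀ Q : List V, Q.Chain' E → Q.head? = some u → Q.getLast? = some v →
      lamTo w W₂ j2v - lamTo w W₂ j2u ≤ lamTo w Q (Q.length - 1)) :
    lamTo w W₁ j1v - lamTo w W₁ j1u = lamTo w W₂ j2v - lamTo w W₂ j2u ∧
      ∀ δ₁ δ₂ d : ℕ,
        δ₁ + lamTo w W₁ j1u = d + lamTo w W₂ j2u →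
        δ₂ + lamTo w W₁ j1v = d + lamTo w W₂ j2v →
        δ₁ = δ₂ := by
  obtain ⟨Q₁, hc1, hh1, hl1, he1⟩ := lamTo_segment E w W₁ h1 u v j1u j1v hj1 h1u h1v
  obtain ⟨Q₂, hc2, hh2, hl2, he2⟩ := lamTo_segment E w W₂ h2 u v j2u j2v hj2 h2u h2v
  have k1 := hshort1 Q₂ hc2 hh2 hl2
  have k2 := hshort2 Q₁ hc1 hh1 hl1
  constructor
  · omega
  · intro δ₁ δ₂ d hd1 hd2; omega
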